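/- Weak Freiman-type theorem (containment form): There exist absolute constants C₁, C₂ ≥ 1 such that for every K ≥ 1, every r ∈ ℕ and every ε ∈ (0,1] there is a constant c > 0, depending only on K, r and ε, with the following property. Suppose that G is a finite group and A ⊆ G is nonempty and symmetric (A⁻¹ = A) with μ_G(A²) ≤ K·μ_G(A). Then there is an ε-closed, c-thick, r-multiplicative pair (B, B′) in G such that B ⊆ A⁴ and μ_G(B) ≥ C₁⁻¹·K^{−C₂}·μ_G(A). -/

import Mathlib

open scoped BigOperators Pointwise

noncomputable section

variable {G : Type*}

/-- Convolution of complex-valued functions on a finite group `G`,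
normalized by the Haar probability measure: `f∗g(x) = (1/|G|)·∑ y, f y * g (y⁻¹x)`. -/
def convC [Group G] [Fintype G] (f g : G → ℂ) : G → ℂ :=
  fun x => (Fintype.card G : ℂ)⁻¹ * ∑ y : G, f y * g (y⁻¹ * x)

/-- The inner product on `L²(μ_G)`: `⟨f,g⟩ = (1/|G|)·∑ x, f x * conj (g x)`. -/
def innerG [Group G] [Fintype G] (f g : G → ℂ) : ℂ :=
  (Fintype.card G : ℂ)⁻¹ * ∑ x : G, f x * (starRingEnd ℂ) (g x)

/-- The `L²(μ_G)` norm. -/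
def l2normG [Group G] [Fintype G] (f : G → ℂ) : ℝ :=
  Real.sqrt ((Fintype.card G : ℝ)⁻¹ * ∑ x : G, ‖f x‖ ^ 2)

/-- `‖f‖_{PM(G)}`: operator norm of `v ↦ f ∗ v` on `L²(μ_G)`. -/
def PMnorm [Group G] [Fintype G] (f : G → ℂ) : ℝ :=
  sSup {r : ℝ | ∃ v : G → ℂ, l2normG v ≤ 1 ∧ r = l2normG (convC f v)}

/-- The algebra norm `‖f‖_{A(G)} = sup{|⟨f,g⟩| : ‖g‖_{PM(G)} ≤ 1}`. -/
def Anorm [Group G] [Fintype G] (f : G → ℂ) : ℝ :=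
  sSup {r : ℝ | ∃ g : G → ℂ, PMnorm g ≤ 1 ∧ r = ‖innerG f g‖}

/-- Complex-valued indicator function of a set. -/
def indC (A : Set G) : G → ℂ := Set.indicator A (1 : G → ℂ)

/-- `μ_A = (|G|/|A|)·1_A`, the density of the uniform probability measure on `A`. -/
def muC [Fintype G] (A : Set G) : G → ℂ :=
  fun x => ((Fintype.card G : ℂ) / (Nat.card A : ℂ)) * indC A x

/-- `μ_G(S) = |S|/|G|`. -/
def density [Fintype G] (S : Set G) : ℝ :=
  (Nat.card S : ℝ) / (Fintype.card G : ℝ)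

/-- Real-valued convolution, normalized by `|G|`. -/
def convR [Group G] [Fintype G] (f g : G → ℝ) : G → ℝ :=
  fun x => (Fintype.card G : ℝ)⁻¹ * ∑ y : G, f y * g (y⁻¹ * x)

/-- Real-valued indicator function of a set. -/
def indR (A : Set G) : G → ℝ := Set.indicator A (1 : G → ℝ)

/-- `μ_A = (|G|/|A|)·1_A`, real-valued. -/
def muR [Fintype G] (A : Set G) : G → ℝ :=
  fun x => ((Fintype.card G : ℝ) / (Nat.card A : ℝ)) * indR A x

/-- The symmetry set `Sym_η(A) = {x : 1_A ∗ 1_{A⁻¹}(x) ≥ η·μ_G(A)}`. -/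
def symmSet [Group G] [Fintype G] (A : Set G) (η : ℝ) : Set G :=
  {x : G | η * density A ≤ convR (indR A) (indR A⁻¹) x}

/-- `(B, B′)` is an `ε`-closed, `c`-thick, `r`-multiplicative pair: both are symmetric
neighbourhoods of the identity, `μ_G(B′) ≥ c·μ_G(B)`, and there are symmetric
neighbourhoods of the identity `B⁺, B⁻` with `B′^r·B⁻·B′^r ⊆ B`, `B′^r·B·B′^r ⊆ B⁺`
and `μ_G(B⁺ \ B⁻) ≤ ε·μ_G(B)`. -/
def IsMultPair [Group G] [Fintype G] (B B' : Set G) (r : ℕ) (ε c : ℝ) : Prop :=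
  (1 ∈ B ∧ B⁻¹ = B) ∧ (1 ∈ B' ∧ B'⁻¹ = B') ∧
  c * density B ≤ density B' ∧
  ∃ Bp Bm : Set G, (1 ∈ Bp ∧ Bp⁻¹ = Bp) ∧ (1 ∈ Bm ∧ Bm⁻¹ = Bm) ∧
    B' ^ r * Bm * B' ^ r ⊆ B ∧ B' ^ r * B * B' ^ r ⊆ Bp ∧
    density (Bp \ Bm) ≤ ε * density B

universe u


set_option linter.unusedSectionVars false
set_option linter.unusedVariables false
set_option linter.deprecated false
set_option linter.dupNamespace false
set_option maxHeartbeats 4000000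

namespace WFaux

open Finset

variable {H : Type u} [Group H] [Fintype H] [DecidableEq H]

def cnv (f g : H → ℝ) : H → ℝ := fun x => ∑ y, f y * g (y⁻¹ * x)

def nsq (f : H → ℝ) : ℝ := ∑ x, (f x) ^ 2

def indF (S : Finset H) : H → ℝ := fun x => if x ∈ S then 1 else 0

lemma indF_nonneg (S : Finset H) (x : H) : 0 ≤ indF S x := by
  unfold indF; split <;> norm_num

lemma indF_le_one (S : Finset H) (x : H) : indF S x ≤ 1 := by
  unfold indF; split <;> norm_num

lemma sum_indF_mul (S : Finset H) (φ : H → ℝ) :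
    ∑ y, indF S y * φ y = ∑ y ∈ S, φ y := by
  classical
  simp only [indF, ite_mul, one_mul, zero_mul]
  rw [Finset.sum_ite_mem, Finset.univ_inter]

lemma sum_indF (S : Finset H) : ∑ y, indF S y = (S.card : ℝ) := by
  have := sum_indF_mul S (fun _ => (1:ℝ))
  simpa using this

lemma nsq_indF (S : Finset H) : nsq (indF S) = (S.card : ℝ) := by
  have h : ∀ x, (indF S x) ^ 2 = indF S x := by
    intro x; unfold indF; split <;> norm_num
  unfold nsq
  rw [Finset.sum_congr rfl fun x _ => h x]
  exact sum_indF S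

lemma nsq_nonneg (f : H → ℝ) : 0 ≤ nsq f :=
  Finset.sum_nonneg fun _ _ => sq_nonneg _

lemma sum_translate (φ : H → ℝ) (s : H) : ∑ x, φ (s * x) = ∑ x, φ x :=
  Fintype.sum_bijective _ (Group.mulLeft_bijective s) _ _ fun _ => rfl

lemma nsq_translate (f : H → ℝ) (s : H) : nsq (fun x => f (s * x)) = nsq f :=
  sum_translate (fun x => f x ^ 2) s

lemma nsq_neg_sub (f g : H → ℝ) :
    nsq (fun x => f x - g x) = nsq (fun x => g x - f x) := by
  unfold nsq; exact Finset.sum_congr rfl fun x _ => by ring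

lemma nsq_add_le (f g : H → ℝ) :
    nsq (fun x => f x + g x) ≤ 2 * nsq f + 2 * nsq g := by
  unfold nsq
  rw [Finset.mul_sum, Finset.mul_sum, ← Finset.sum_add_distrib]
  refine Finset.sum_le_sum fun x _ => ?_
  show (f x + g x) ^ 2 ≤ 2 * f x ^ 2 + 2 * g x ^ 2
  nlinarith [sq_nonneg (f x - g x)]

lemma cnv_sq_le (f g : H → ℝ) (x : H) : (cnv f g x) ^ 2 ≤ nsq f * nsq g := by
  unfold cnv
  refine le_trans (Finset.sum_mul_sq_le_sq_mul_sq Finset.univ f (fun y => g (y⁻¹ * x))) ?_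
  unfold nsq
  have h : ∑ y, g (y⁻¹ * x) ^ 2 = ∑ y, g y ^ 2 := by
    refine Fintype.sum_bijective (fun y => y⁻¹ * x) ?_ _ _ fun y => rfl
    constructor
    · intro u v huv
      simpa using mul_right_cancel huv
    · intro z; exact ⟨x * z⁻¹, by group⟩
  rw [h]

lemma cnv_translate (f g : H → ℝ) (s : H) (x : H) :
    cnv (fun y => f (s * y)) g x = cnv f g (s * x) := by
  unfold cnv
  refine Fintype.sum_bijective (fun y => s * y) (Group.mulLeft_bijective s) _ _ fun y => ?_
  simp [mul_assoc]

lemma cnv_sub_left (f f' g : H → ℝ) (x : H) :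
    cnv (fun y => f y - f' y) g x = cnv f g x - cnv f' g x := by
  unfold cnv
  rw [← Finset.sum_sub_distrib]
  exact Finset.sum_congr rfl fun y _ => by ring

lemma sum_cnv (f g : H → ℝ) : ∑ x, cnv f g x = (∑ y, f y) * (∑ z, g z) := by
  unfold cnv
  rw [Finset.sum_comm, Finset.sum_mul]
  refine Finset.sum_congr rfl fun y _ => ?_
  rw [← Finset.mul_sum]
  congr 1
  exact sum_translate g y⁻¹

lemma indF_inv {A : Finset H} (hsym : A⁻¹ = A) (x : H) : indF A x⁻¹ = indF A x := by
  classical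
  unfold indF
  have h : x⁻¹ ∈ A ↔ x ∈ A := by
    constructor
    · intro h; have := Finset.inv_mem_inv h; rwa [inv_inv, hsym] at this
    · intro h; have := Finset.inv_mem_inv h; rwa [hsym] at this
  simp [h]

lemma msym {A : Finset H} (hsym : A⁻¹ = A) : (A * A)⁻¹ = A * A := by
  rw [mul_inv_rev, hsym]

def Ffun (A : Finset H) : H → ℝ := cnv (cnv (indF A) (indF (A * A))) (indF A)

lemma Ffun_eq3 (A : Finset H) (x : H) :
    Ffun A x = ∑ z, ∑ c, indF A z * indF (A * A) (z⁻¹ * x * c⁻¹) * indF A c := by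
  unfold Ffun cnv
  have step1 : ∑ y, (∑ z, indF A z * indF (A * A) (z⁻¹ * y)) * indF A (y⁻¹ * x)
      = ∑ z, ∑ y, indF A z * indF (A * A) (z⁻¹ * y) * indF A (y⁻¹ * x) := by
    rw [Finset.sum_comm]
    exact Finset.sum_congr rfl fun y _ => by rw [Finset.sum_mul]
  rw [step1]
  refine Finset.sum_congr rfl fun z _ => ?_
  have step2 : ∑ y, indF A z * indF (A * A) (z⁻¹ * y) * indF A (y⁻¹ * x)
      = ∑ w, indF A z * indF (A * A) w * indF A (w⁻¹ * z⁻¹ * x) := by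
    rw [← sum_translate (fun y => indF A z * indF (A * A) (z⁻¹ * y) * indF A (y⁻¹ * x)) z]
    refine Finset.sum_congr rfl fun w _ => ?_
    have e1 : z⁻¹ * (z * w) = w := by group
    have e2 : (z * w)⁻¹ * x = w⁻¹ * z⁻¹ * x := by group
    rw [e1, e2]
  rw [step2]
  refine (Fintype.sum_bijective (fun c => z⁻¹ * x * c⁻¹) ?_ _ _ fun c => ?_).symm
  · have h : (fun c : H => z⁻¹ * x * c⁻¹) = (fun d => (z⁻¹ * x) * d) ∘ (fun c => c⁻¹) := by
      funext c; simp [mul_assoc]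
    rw [h]
    exact (Group.mulLeft_bijective (z⁻¹ * x)).comp inv_involutive.bijective
  · have e3 : (z⁻¹ * x * c⁻¹)⁻¹ * z⁻¹ * x = c := by group
    rw [e3]

lemma Ffun_nonneg (A : Finset H) (x : H) : 0 ≤ Ffun A x := by
  rw [Ffun_eq3]
  refine Finset.sum_nonneg fun z _ => Finset.sum_nonneg fun c _ => ?_
  exact mul_nonneg (mul_nonneg (indF_nonneg _ _) (indF_nonneg _ _)) (indF_nonneg _ _)

lemma sum_Ffun (A : Finset H) :
    ∑ x, Ffun A x = (A.card : ℝ) ^ 2 * ((A * A).card : ℝ) := by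
  unfold Ffun
  rw [sum_cnv, sum_cnv, sum_indF, sum_indF]
  ring

lemma Ffun_one_ge (A : Finset H) (hsym : A⁻¹ = A) :
    (A.card : ℝ) ^ 2 ≤ Ffun A 1 := by
  rw [Ffun_eq3]
  have h : ((A.card : ℝ)) ^ 2 = ∑ z, ∑ c, indF A z * indF A c := by
    rw [sq, ← sum_indF A]
    rw [Finset.sum_mul_sum]
  rw [h]
  refine Finset.sum_le_sum fun z _ => Finset.sum_le_sum fun c _ => ?_
  by_cases hz : z ∈ A
  · by_cases hc : c ∈ A
    · have hm : z⁻¹ * 1 * c⁻¹ ∈ A * A := by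
        rw [mul_one]
        refine Finset.mul_mem_mul ?_ ?_ <;> rw [← hsym] <;> exact Finset.inv_mem_inv ‹_›
      simp only [indF, if_pos hz, if_pos hc, if_pos hm]
      norm_num
    · have hL : indF A z * indF A c = 0 := by simp [indF, hc]
      rw [hL]
      exact mul_nonneg (mul_nonneg (indF_nonneg _ _) (indF_nonneg _ _)) (indF_nonneg _ _)
  · have hL : indF A z * indF A c = 0 := by simp [indF, hz]
    rw [hL]
    exact mul_nonneg (mul_nonneg (indF_nonneg _ _) (indF_nonneg _ _)) (indF_nonneg _ _)

lemma Ffun_ge_nu (A : Finset H) (hsym : A⁻¹ = A) (x : H) :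
    cnv (indF A) (indF A) x * (A.card : ℝ) ≤ Ffun A x := by
  rw [Ffun_eq3]
  have h : cnv (indF A) (indF A) x * (A.card : ℝ)
      = ∑ z, ∑ c, indF A z * indF A (z⁻¹ * x) * indF A c := by
    unfold cnv
    rw [← sum_indF A, Finset.sum_mul]
    exact Finset.sum_congr rfl fun z _ => by rw [Finset.mul_sum]
  rw [h]
  refine Finset.sum_le_sum fun z _ => Finset.sum_le_sum fun c _ => ?_
  by_cases hz : z ∈ A
  · by_cases hzx : z⁻¹ * x ∈ A
    · by_cases hc : c ∈ A
      · have hm : z⁻¹ * x * c⁻¹ ∈ A * A := by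
          refine Finset.mul_mem_mul hzx ?_
          rw [← hsym]; exact Finset.inv_mem_inv hc
        simp only [indF, if_pos hz, if_pos hzx, if_pos hc, if_pos hm]
        norm_num
      · have hL : indF A z * indF A (z⁻¹ * x) * indF A c = 0 := by simp [indF, hc]
        rw [hL]
        exact mul_nonneg (mul_nonneg (indF_nonneg _ _) (indF_nonneg _ _)) (indF_nonneg _ _)
    · have hL : indF A z * indF A (z⁻¹ * x) * indF A c = 0 := by simp [indF, hzx]
      rw [hL]
      exact mul_nonneg (mul_nonneg (indF_nonneg _ _) (indF_nonneg _ _)) (indF_nonneg _ _)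
  · have hL : indF A z * indF A (z⁻¹ * x) * indF A c = 0 := by simp [indF, hz]
    rw [hL]
    exact mul_nonneg (mul_nonneg (indF_nonneg _ _) (indF_nonneg _ _)) (indF_nonneg _ _)

lemma Ffun_inv (A : Finset H) (hsym : A⁻¹ = A) (x : H) : Ffun A x⁻¹ = Ffun A x := by
  rw [Ffun_eq3, Ffun_eq3]
  rw [← Finset.sum_product', ← Finset.sum_product']
  refine Fintype.sum_bijective (fun p : H × H => (p.2⁻¹, p.1⁻¹)) ?_ _ _ fun p => ?_
  · constructor
    · intro p q hpq
      simp only [Prod.mk.injEq] at hpq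
      ext
      · exact inv_injective hpq.2
      · exact inv_injective hpq.1
    · intro q; exact ⟨(q.2⁻¹, q.1⁻¹), by simp⟩
  · obtain ⟨z, c⟩ := p
    simp only
    have e1 : (c⁻¹)⁻¹ * x * (z⁻¹)⁻¹ = (z⁻¹ * x⁻¹ * c⁻¹)⁻¹ := by group
    rw [e1, indF_inv (msym hsym), indF_inv hsym, indF_inv hsym]
    ring

lemma Ffun_pos_mem (A : Finset H) {x : H} (hx : 0 < Ffun A x) : x ∈ A ^ 4 := by
  by_contra hx4
  have h : Ffun A x = 0 := by
    rw [Ffun_eq3]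
    refine Finset.sum_eq_zero fun z _ => Finset.sum_eq_zero fun c _ => ?_
    by_cases hz : z ∈ A
    · by_cases hc : c ∈ A
      · by_cases hm : z⁻¹ * x * c⁻¹ ∈ A * A
        · exfalso
          apply hx4
          have hmem : z * (z⁻¹ * x * c⁻¹) * c ∈ A * (A * A) * A :=
            Finset.mul_mem_mul (Finset.mul_mem_mul hz hm) hc
          have e : z * (z⁻¹ * x * c⁻¹) * c = x := by group
          rw [e] at hmem
          have h4 : A * (A * A) * A = A ^ 4 := by
            rw [pow_succ, pow_succ, sq]
            rw [mul_assoc A A A]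
          rwa [h4] at hmem
        · simp [indF, hm]
      · simp [indF, hc]
    · simp [indF, hz]
  rw [h] at hx
  exact lt_irrefl 0 hx

open Classical in
def Sper (A : Finset H) (δ : ℝ) : Finset H :=
  Finset.univ.filter fun s => ∀ x, |Ffun A (s⁻¹ * x) - Ffun A x| ≤ δ * (A.card : ℝ) ^ 2

lemma mem_Sper {A : Finset H} {δ : ℝ} {s : H} :
    s ∈ Sper A δ ↔ ∀ x, |Ffun A (s⁻¹ * x) - Ffun A x| ≤ δ * (A.card : ℝ) ^ 2 := by
  unfold Sper
  simp

lemma one_mem_Sper {A : Finset H} {δ : ℝ} (hδ : 0 ≤ δ) : (1 : H) ∈ Sper A δ := by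
  rw [mem_Sper]
  intro x
  simp only [inv_one, one_mul, sub_self, abs_zero]
  positivity

lemma Sper_shift {A : Finset H} {δ : ℝ} {s : H} (hs : s ∈ Sper A δ) (x : H) :
    |Ffun A (s * x) - Ffun A x| ≤ δ * (A.card : ℝ) ^ 2 := by
  have h := (mem_Sper.mp hs) (s * x)
  rw [inv_mul_cancel_left] at h
  rw [abs_sub_comm] at h
  exact h

lemma Sper_inv_mem {A : Finset H} {δ : ℝ} {s : H} (hs : s ∈ Sper A δ) : s⁻¹ ∈ Sper A δ := by
  rw [mem_Sper]
  intro x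
  rw [inv_inv]
  exact Sper_shift hs x

lemma Sper_inv_eq {A : Finset H} {δ : ℝ} : (Sper A δ)⁻¹ = Sper A δ := by
  ext s
  rw [Finset.mem_inv']
  constructor
  · intro h; have := Sper_inv_mem h; rwa [inv_inv] at this
  · exact Sper_inv_mem

lemma sper_left {A : Finset H} {δ : ℝ} :
    ∀ n : ℕ, ∀ u ∈ (Sper A δ) ^ n, ∀ x,
      |Ffun A (u * x) - Ffun A x| ≤ n * (δ * (A.card : ℝ) ^ 2) := by
  intro n
  induction n with
  | zero =>
    intro u hu x
    rw [pow_zero, Finset.mem_one] at hu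
    subst hu
    simp
  | succ n ih =>
    intro u hu x
    rw [pow_succ', Finset.mem_mul] at hu
    obtain ⟨s, hs, w, hw, rfl⟩ := hu
    have h1 : |Ffun A (s * (w * x)) - Ffun A (w * x)| ≤ δ * (A.card : ℝ) ^ 2 :=
      Sper_shift hs (w * x)
    have h2 := ih w hw x
    have e : s * w * x = s * (w * x) := by group
    rw [e]
    calc |Ffun A (s * (w * x)) - Ffun A x|
        ≤ |Ffun A (s * (w * x)) - Ffun A (w * x)| + |Ffun A (w * x) - Ffun A x| :=
          abs_sub_le _ _ _
      _ ≤ δ * (A.card : ℝ) ^ 2 + n * (δ * (A.card : ℝ) ^ 2) := add_le_add h1 h2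
      _ = (n + 1 : ℕ) * (δ * (A.card : ℝ) ^ 2) := by push_cast; ring

lemma sper_pow_inv {A : Finset H} {δ : ℝ} :
    ∀ n : ℕ, ∀ u ∈ (Sper A δ) ^ n, u⁻¹ ∈ (Sper A δ) ^ n := by
  intro n
  induction n with
  | zero =>
    intro u hu
    rw [pow_zero, Finset.mem_one] at hu ⊢
    rw [hu, inv_one]
  | succ n ih =>
    intro u hu
    rw [pow_succ', Finset.mem_mul] at hu
    obtain ⟨s, hs, w, hw, rfl⟩ := hu
    rw [pow_succ, Finset.mem_mul]
    exact ⟨w⁻¹, ih w hw, s⁻¹, Sper_inv_mem hs, by rw [mul_inv_rev]⟩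

lemma sper_right {A : Finset H} (hsym : A⁻¹ = A) {δ : ℝ} :
    ∀ n : ℕ, ∀ w ∈ (Sper A δ) ^ n, ∀ x,
      |Ffun A (x * w) - Ffun A x| ≤ n * (δ * (A.card : ℝ) ^ 2) := by
  intro n w hw x
  have h1 := sper_left n w⁻¹ (sper_pow_inv n w hw) x⁻¹
  rw [← Ffun_inv A hsym (x * w), ← Ffun_inv A hsym x]
  have e : (x * w)⁻¹ = w⁻¹ * x⁻¹ := by rw [mul_inv_rev]
  rw [e]
  exact h1

end WFaux

namespace WFaux

open Finset

section Probability

lemma sum_eval {ι β : Type*} [DecidableEq ι] [Fintype ι] [Fintype β] (i : ι) (F : β → ℝ) :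
    ∑ Y : ι → β, F (Y i) =
      (Fintype.card ({j : ι // j ≠ i} → β) : ℝ) * ∑ b, F b := by
  rw [← Equiv.sum_comp (Equiv.funSplitAt i β).symm (fun Y => F (Y i))]
  have he : ∀ p : β × ({j : ι // j ≠ i} → β), ((Equiv.funSplitAt i β).symm p) i = p.1 := by
    intro p; simp
  rw [Fintype.sum_prod_type]
  simp only [he, Finset.sum_const, Finset.card_univ, nsmul_eq_mul]
  rw [← Finset.mul_sum]

lemma sum_eval_ne {ι β : Type*} [DecidableEq ι] [Fintype ι] [Fintype β] {i j : ι} (hij : j ≠ i)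
    (w : β → ℝ) (hw : ∑ b, w b = 0) :
    ∑ Y : ι → β, w (Y i) * w (Y j) = 0 := by
  rw [← Equiv.sum_comp (Equiv.funSplitAt i β).symm (fun Y => w (Y i) * w (Y j))]
  have hi : ∀ p : β × ({l : ι // l ≠ i} → β), ((Equiv.funSplitAt i β).symm p) i = p.1 := by
    intro p; simp
  have hj : ∀ p : β × ({l : ι // l ≠ i} → β),
      ((Equiv.funSplitAt i β).symm p) j = p.2 ⟨j, hij⟩ := by
    intro p; simp [Equiv.funSplitAt, hij]
  rw [Fintype.sum_prod_type]
  simp only [hi, hj]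
  have h : ∀ b : β, ∑ z : {l : ι // l ≠ i} → β, w b * w (z ⟨j, hij⟩) =
      w b * ∑ z : {l : ι // l ≠ i} → β, w (z ⟨j, hij⟩) := by
    intro b; rw [Finset.mul_sum]
  rw [Finset.sum_congr rfl fun b _ => h b, ← Finset.sum_mul, hw, zero_mul]

lemma variance_sum {β : Type*} [Fintype β] (m : ℕ) (w : β → ℝ) (hw : ∑ b, w b = 0) :
    ∑ Y : Fin (m + 1) → β, (∑ i, w (Y i)) ^ 2 =
      (m + 1 : ℝ) * (Fintype.card β : ℝ) ^ m * ∑ b, (w b) ^ 2 := by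
  have step1 : ∀ Y : Fin (m+1) → β, (∑ i, w (Y i)) ^ 2 = ∑ i, ∑ j, w (Y i) * w (Y j) := by
    intro Y; rw [sq, Finset.sum_mul_sum]
  rw [Finset.sum_congr rfl fun Y _ => step1 Y]
  rw [Finset.sum_comm]
  have step2 : ∀ i : Fin (m+1), ∑ Y : Fin (m+1) → β, ∑ j, w (Y i) * w (Y j)
      = (Fintype.card β : ℝ) ^ m * ∑ b, (w b) ^ 2 := by
    intro i
    rw [Finset.sum_comm]
    have hcard : (Fintype.card ({j : Fin (m+1) // j ≠ i} → β) : ℝ)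
        = (Fintype.card β : ℝ) ^ m := by
      rw [Fintype.card_fun]
      have h : Fintype.card {j : Fin (m+1) // j ≠ i} = m := by
        rw [Fintype.card_subtype_compl (p := fun j => j = i)]
        simp [Fintype.card_subtype_eq]
      rw [h]; push_cast; ring
    have diag : ∑ Y : Fin (m+1) → β, w (Y i) * w (Y i)
        = (Fintype.card β : ℝ) ^ m * ∑ b, (w b) ^ 2 := by
      calc ∑ Y : Fin (m+1) → β, w (Y i) * w (Y i)
          = ∑ Y : Fin (m+1) → β, (w (Y i)) ^ 2 :=
            Finset.sum_congr rfl fun Y _ => (sq (w (Y i))).symm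
        _ = _ := by rw [sum_eval i (fun b => (w b) ^ 2), hcard]
    rw [Finset.sum_eq_single i]
    · exact diag
    · intro j _ hji
      exact sum_eval_ne hji w hw
    · intro h; exact absurd (Finset.mem_univ i) h
  rw [Finset.sum_congr rfl fun i _ => step2 i]
  rw [Finset.sum_const, Finset.card_univ, Fintype.card_fin, nsmul_eq_mul]
  push_cast; ring

end Probability

variable {H : Type u} [Group H] [Fintype H] [DecidableEq H]

/-- the sampled approximation to `hbar` -/
def gsamp (A : Finset H) (m : ℕ) (Y : Fin (m+1) → {y // y ∈ A}) : H → ℝ :=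
  fun x => ((m : ℝ) + 1)⁻¹ * ∑ i, indF (A * A) ((Y i : H)⁻¹ * x)

/-- normalized convolution `1_A ∗ 1_{A²} / |A|` -/
def hbar (A : Finset H) : H → ℝ :=
  fun x => cnv (indF A) (indF (A * A)) x / (A.card : ℝ)

def Dsamp (A : Finset H) (m : ℕ) (Y : Fin (m+1) → {y // y ∈ A}) : ℝ :=
  nsq (fun x => gsamp A m Y x - hbar A x)

def phiMap (A : Finset H) (m : ℕ) (Y : Fin (m+1) → {y // y ∈ A}) : Fin m → H :=
  fun i => ((Y 0 : H))⁻¹ * (Y i.succ : H)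

theorem sper_card_ge (A : Finset H) (hA : A.Nonempty) (hsym : A⁻¹ = A)
    (K : ℝ) (hK : 1 ≤ K) (hdbl : ((A * A).card : ℝ) ≤ K * A.card)
    (δ : ℝ) (hδ : 0 < δ) (m : ℕ) (hm : 8 * K ≤ δ ^ 2 * (m + 1)) :
    (A.card : ℝ) / (2 * K ^ m) ≤ ((Sper A δ).card : ℝ) := by
  have hK0 : 0 < K := lt_of_lt_of_le one_pos hK
  set a : ℝ := (A.card : ℝ) with ha_def
  have ha : 0 < a := by
    rw [ha_def]
    exact_mod_cast Finset.card_pos.mpr hA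
  have hkpos : (0:ℝ) < (m:ℝ) + 1 := by positivity
  -- the average function
  have h_eq : ∀ x, cnv (indF A) (indF (A * A)) x = a * hbar A x := by
    intro x; unfold hbar; field_simp; rfl
  have hsum_fiber : ∀ x : H, ∑ b : {y // y ∈ A}, indF (A * A) ((b : H)⁻¹ * x)
      = cnv (indF A) (indF (A * A)) x := by
    intro x
    unfold cnv
    rw [sum_indF_mul A (fun y => indF (A * A) (y⁻¹ * x))]
    exact Finset.sum_coe_sort A (fun y => indF (A * A) (y⁻¹ * x))
  -- centered variables
  set w : H → {y // y ∈ A} → ℝ :=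
    fun x b => indF (A * A) ((b : H)⁻¹ * x) - hbar A x with hw_def
  have hwrfl : ∀ x (b : {y // y ∈ A}), w x b = indF (A * A) ((b : H)⁻¹ * x) - hbar A x :=
    fun x b => rfl
  have hw0 : ∀ x, ∑ b, w x b = 0 := by
    intro x
    rw [Finset.sum_congr rfl fun b _ => hwrfl x b]
    rw [Finset.sum_sub_distrib, hsum_fiber x, Finset.sum_const, Finset.card_univ,
      Fintype.card_coe, h_eq x, nsmul_eq_mul]
    rw [ha_def]
    ring
  have hDexp : ∀ Y : Fin (m+1) → {y // y ∈ A},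
      Dsamp A m Y = (((m:ℝ)+1))⁻¹ ^ 2 * ∑ x, (∑ i, w x (Y i)) ^ 2 := by
    intro Y
    unfold Dsamp nsq
    rw [Finset.mul_sum]
    refine Finset.sum_congr rfl fun x _ => ?_
    show (gsamp A m Y x - hbar A x) ^ 2 = ((m:ℝ)+1)⁻¹ ^ 2 * (∑ i, w x (Y i)) ^ 2
    have e : gsamp A m Y x - hbar A x = ((m:ℝ)+1)⁻¹ * (∑ i, w x (Y i)) := by
      rw [Finset.sum_congr rfl fun i (_ : i ∈ Finset.univ) => hwrfl x (Y i)]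
      rw [Finset.sum_sub_distrib, Finset.sum_const, Finset.card_univ, Fintype.card_fin,
        nsmul_eq_mul]
      unfold gsamp
      have hne : ((m:ℝ)+1) ≠ 0 := ne_of_gt hkpos
      field_simp
      push_cast; ring
    rw [e, mul_pow]
  have hD0 : ∀ Y, 0 ≤ Dsamp A m Y := fun Y => nsq_nonneg _
  -- second moment bound
  have hsum2 : ∑ x, ∑ b : {y // y ∈ A}, (w x b) ^ 2 ≤ K * a ^ 2 := by
    rw [Finset.sum_comm]
    have hper : ∀ b : {y // y ∈ A}, ∑ x, (w x b) ^ 2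
        = nsq (indF (A * A)) - 2 * (∑ x, indF (A * A) ((b:H)⁻¹ * x) * hbar A x)
          + nsq (hbar A) := by
      intro b
      have hpt : ∀ x : H, (w x b) ^ 2
          = indF (A * A) ((b:H)⁻¹ * x) ^ 2
            - 2 * (indF (A * A) ((b:H)⁻¹ * x) * hbar A x) + (hbar A x) ^ 2 := fun x => by
        rw [hwrfl x b]; ring
      rw [Finset.sum_congr rfl fun x _ => hpt x]
      rw [Finset.sum_add_distrib, Finset.sum_sub_distrib, ← Finset.mul_sum]
      have e1 : ∑ x, indF (A * A) ((b:H)⁻¹ * x) ^ 2 = nsq (indF (A * A)) :=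
        sum_translate (fun x => indF (A * A) x ^ 2) (b:H)⁻¹
      rw [e1]
      rfl
    rw [Finset.sum_congr rfl fun b _ => hper b]
    have hIb : ∑ b : {y // y ∈ A}, (∑ x, indF (A * A) ((b:H)⁻¹ * x) * hbar A x)
        = a * nsq (hbar A) := by
      rw [Finset.sum_comm]
      have h1 : ∀ x : H, ∑ b : {y // y ∈ A}, indF (A * A) ((b:H)⁻¹ * x) * hbar A x
          = cnv (indF A) (indF (A * A)) x * hbar A x := by
        intro x; rw [← Finset.sum_mul, hsum_fiber x]
      rw [Finset.sum_congr rfl fun x _ => h1 x]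
      have h2 : ∀ x : H, cnv (indF A) (indF (A * A)) x * hbar A x = a * (hbar A x) ^ 2 :=
        fun x => by rw [h_eq x]; ring
      rw [Finset.sum_congr rfl fun x _ => h2 x, ← Finset.mul_sum]
      rfl
    rw [Finset.sum_add_distrib, Finset.sum_sub_distrib, Finset.sum_const, Finset.sum_const,
      Finset.card_univ, Fintype.card_coe, ← Finset.mul_sum, hIb]
    rw [nsq_indF]
    have hbnn : 0 ≤ nsq (hbar A) := nsq_nonneg _
    rw [nsmul_eq_mul, nsmul_eq_mul, ← ha_def]
    have hub : a * ((A * A).card : ℝ) ≤ a * (K * a) :=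
      mul_le_mul_of_nonneg_left hdbl (le_of_lt ha)
    nlinarith [hbnn, ha, hub]
  -- variance bound
  have hvar : ∑ Y : Fin (m+1) → {y // y ∈ A}, Dsamp A m Y
      ≤ K * a ^ (m + 2) / ((m:ℝ) + 1) := by
    rw [Finset.sum_congr rfl fun Y _ => hDexp Y]
    rw [← Finset.mul_sum]
    rw [Finset.sum_comm]
    have hx : ∀ x : H, ∑ Y : Fin (m+1) → {y // y ∈ A}, (∑ i, w x (Y i)) ^ 2
        = ((m:ℝ)+1) * a ^ m * ∑ b, (w x b) ^ 2 := by
      intro x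
      have h := variance_sum m (w x) (hw0 x)
      rwa [Fintype.card_coe, ← ha_def] at h
    rw [Finset.sum_congr rfl fun x _ => hx x]
    have hXnn : (0:ℝ) ≤ ∑ x, ∑ b : {y // y ∈ A}, (w x b) ^ 2 :=
      Finset.sum_nonneg fun x _ => Finset.sum_nonneg fun b _ => sq_nonneg _
    have hfac : ∑ x : H, ((m:ℝ)+1) * a ^ m * ∑ b, (w x b) ^ 2
        = ((m:ℝ)+1) * a ^ m * ∑ x, ∑ b, (w x b) ^ 2 := by
      rw [Finset.mul_sum]
    rw [hfac]
    have heq : (((m:ℝ)+1))⁻¹ ^ 2 * (((m:ℝ)+1) * a ^ m * (∑ x, ∑ b : {y // y ∈ A}, (w x b) ^ 2))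
        = (a ^ m / ((m:ℝ)+1)) * (∑ x, ∑ b : {y // y ∈ A}, (w x b) ^ 2) := by
      field_simp
    rw [heq]
    have hstep : (a ^ m / ((m:ℝ)+1)) * (∑ x, ∑ b : {y // y ∈ A}, (w x b) ^ 2)
        ≤ (a ^ m / ((m:ℝ)+1)) * (K * a ^ 2) :=
      mul_le_mul_of_nonneg_left hsum2 (by positivity)
    refine le_trans hstep (le_of_eq ?_)
    field_simp
    ring
  -- Markov: the good set
  classical
  set v : ℝ := 2 * K * a / ((m:ℝ) + 1) with hv_def
  have hv : 0 < v := by rw [hv_def]; positivity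
  set Good : Finset (Fin (m+1) → {y // y ∈ A}) :=
    Finset.univ.filter (fun Y => Dsamp A m Y ≤ v) with hGood_def
  have hcard_univ : ((Finset.univ : Finset (Fin (m+1) → {y // y ∈ A})).card : ℝ) = a ^ (m+1) := by
    rw [Finset.card_univ, Fintype.card_fun, Fintype.card_coe, Fintype.card_fin, ha_def]
    push_cast
    ring
  have hGoodcard : a ^ (m+1) / 2 ≤ (Good.card : ℝ) := by
    by_contra hcon
    push_neg at hcon
    have hsplit : (Good.card : ℝ)
        + ((Finset.univ.filter (fun Y => ¬ Dsamp A m Y ≤ v)).card : ℝ) = a ^ (m+1) := by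
      rw [← hcard_univ, hGood_def]
      exact_mod_cast Finset.card_filter_add_card_filter_not
        (s := Finset.univ) (p := fun Y => Dsamp A m Y ≤ v)
    set Bad := Finset.univ.filter (fun Y => ¬ Dsamp A m Y ≤ v) with hBad_def
    have hBadlb : a ^ (m+1) / 2 < (Bad.card : ℝ) := by linarith
    have hBadsum : (Bad.card : ℝ) * v ≤ ∑ Y ∈ Bad, Dsamp A m Y := by
      have h := Finset.card_nsmul_le_sum Bad (fun Y => Dsamp A m Y) v
        (fun Y hY => le_of_lt (lt_of_not_ge (Finset.mem_filter.mp hY).2))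
      rw [nsmul_eq_mul] at h
      exact h
    have hBadsum2 : ∑ Y ∈ Bad, Dsamp A m Y ≤ ∑ Y, Dsamp A m Y :=
      Finset.sum_le_sum_of_subset_of_nonneg (Finset.filter_subset _ _) (fun Y _ _ => hD0 Y)
    have hcontr : (Bad.card : ℝ) * v ≤ K * a ^ (m+2) / ((m:ℝ)+1) :=
      le_trans hBadsum (le_trans hBadsum2 hvar)
    have heq2 : K * a ^ (m+2) / ((m:ℝ)+1) = a ^ (m+1) * v / 2 := by
      rw [hv_def]
      field_simp
      ring
    rw [heq2] at hcontr
    nlinarith [mul_lt_mul_of_pos_right hBadlb hv]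
  -- fibers of the difference map
  have hmaps : ∀ Y ∈ Good, phiMap A m Y ∈ Fintype.piFinset (fun _ : Fin m => A * A) := by
    intro Y _
    rw [Fintype.mem_piFinset]
    intro i
    refine Finset.mul_mem_mul ?_ (Y i.succ).2
    have h := Finset.inv_mem_inv (Y 0).2
    rwa [hsym] at h
  have hMTne : (Fintype.piFinset (fun _ : Fin m => A * A)).Nonempty := by
    rw [Fintype.piFinset_nonempty]
    intro i
    exact hA.mul hA
  obtain ⟨ys, hysmem, hysmax⟩ := Finset.exists_max_image
    (Fintype.piFinset (fun _ : Fin m => A * A))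
    (fun y => (Good.filter (fun Y => phiMap A m Y = y)).card) hMTne
  set Fib : Finset (Fin (m+1) → {y // y ∈ A}) :=
    Good.filter (fun Y => phiMap A m Y = ys) with hFib_def
  have hGle : (Good.card : ℝ) ≤ ((A * A).card : ℝ) ^ m * (Fib.card : ℝ) := by
    have h1 : Good.card ≤ (Fintype.piFinset (fun _ : Fin m => A * A)).card * Fib.card := by
      rw [Finset.card_eq_sum_card_fiberwise hmaps]
      calc ∑ y ∈ Fintype.piFinset (fun _ : Fin m => A * A),
            (Good.filter (fun Y => phiMap A m Y = y)).card
          ≤ ∑ _y ∈ Fintype.piFinset (fun _ : Fin m => A * A), Fib.card :=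
            Finset.sum_le_sum fun y hy => hysmax y hy
        _ = (Fintype.piFinset (fun _ : Fin m => A * A)).card * Fib.card := by
            rw [Finset.sum_const, smul_eq_mul]
    have h2 : (Fintype.piFinset (fun _ : Fin m => A * A)).card = (A * A).card ^ m := by
      rw [Fintype.card_piFinset, Finset.prod_const, Finset.card_univ, Fintype.card_fin]
    rw [h2] at h1
    exact_mod_cast h1
  have hFibcard : a / (2 * K ^ m) ≤ (Fib.card : ℝ) := by
    have hMa : ((A * A).card : ℝ) ^ m * (Fib.card : ℝ) ≤ (K * a) ^ m * (Fib.card : ℝ) := by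
      refine mul_le_mul_of_nonneg_right ?_ (Nat.cast_nonneg _)
      exact pow_le_pow_left₀ (Nat.cast_nonneg _) hdbl m
    have h3 : a ^ (m+1) / 2 ≤ (K * a) ^ m * (Fib.card : ℝ) :=
      le_trans hGoodcard (le_trans hGle hMa)
    have ham : (0:ℝ) < a ^ m := by positivity
    have h4 : a * a ^ m ≤ ((Fib.card : ℝ) * (2 * K ^ m)) * a ^ m := by
      have e : (K * a) ^ m = K ^ m * a ^ m := mul_pow K a m
      rw [e] at h3
      have e2 : a ^ (m+1) = a * a ^ m := by ring
      nlinarith [h3]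
    have h5 : a ≤ (Fib.card : ℝ) * (2 * K ^ m) := le_of_mul_le_mul_right h4 ham
    rw [div_le_iff₀ (by positivity : (0:ℝ) < 2 * K ^ m)]
    linarith
  have hFibne : Fib.Nonempty := by
    have h : (0:ℝ) < (Fib.card : ℝ) := lt_of_lt_of_le (by positivity) hFibcard
    exact Finset.card_pos.mp (by exact_mod_cast h)
  obtain ⟨W, hW⟩ := hFibne
  have hWf : phiMap A m W = ys := (Finset.mem_filter.mp hW).2
  have hDFib : ∀ Z ∈ Fib, Dsamp A m Z ≤ v := by
    intro Z hZ
    have hZG : Z ∈ Good := (Finset.mem_filter.mp hZ).1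
    rw [hGood_def] at hZG
    exact (Finset.mem_filter.mp hZG).2
  have hZdet : ∀ Z ∈ Fib, ∀ i, (Z i : H) = ((Z 0 : H) * ((W 0 : H))⁻¹) * (W i : H) := by
    intro Z hZ i
    have hZf : phiMap A m Z = ys := (Finset.mem_filter.mp hZ).2
    refine Fin.cases ?_ (fun l => ?_) i
    · group
    · have e1 : ((Z 0 : H))⁻¹ * (Z l.succ : H) = ys l := congrFun hZf l
      have e2 : ((W 0 : H))⁻¹ * (W l.succ : H) = ys l := congrFun hWf l
      calc (Z l.succ : H) = (Z 0 : H) * (((Z 0 : H))⁻¹ * (Z l.succ : H)) := by group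
        _ = (Z 0 : H) * (((W 0 : H))⁻¹ * (W l.succ : H)) := by rw [e1, e2]
        _ = ((Z 0 : H) * ((W 0 : H))⁻¹) * (W l.succ : H) := by group
  clear_value v Good Fib
  have hinj : Set.InjOn (fun Z : Fin (m+1) → {y // y ∈ A} => (Z 0 : H) * ((W 0 : H))⁻¹)
      ↑Fib := by
    intro Z hZ Z' hZ' hzz
    simp only at hzz
    have h00 : (Z 0 : H) = (Z' 0 : H) := mul_right_cancel hzz
    funext i
    refine Subtype.ext ?_
    rw [hZdet Z (Finset.mem_coe.mp hZ) i, hZdet Z' (Finset.mem_coe.mp hZ') i, h00]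
  have hcardim : ((Fib.image (fun Z => (Z 0 : H) * ((W 0 : H))⁻¹)).card : ℝ)
      = (Fib.card : ℝ) := by
    exact_mod_cast congrArg Nat.cast (Finset.card_image_of_injOn hinj)
  have hsub : Fib.image (fun Z => (Z 0 : H) * ((W 0 : H))⁻¹) ⊆ Sper A δ := by
    intro t ht
    obtain ⟨Z, hZ, hzt⟩ := Finset.mem_image.mp ht
    rw [mem_Sper]
    intro x
    have hgZ : ∀ u, gsamp A m Z u = gsamp A m W (t⁻¹ * u) := by
      intro u
      unfold gsamp
      congr 1
      refine Finset.sum_congr rfl fun i _ => ?_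
      rw [hZdet Z hZ i]
      congr 1
      rw [← hzt]
      group
    have hDZ : Dsamp A m Z ≤ v := hDFib Z hZ
    have hDW : Dsamp A m W ≤ v := hDFib W hW
    have hmid : nsq (fun u => hbar A (t⁻¹ * u) - hbar A u) ≤ 4 * v := by
      have hpt : ∀ u, hbar A (t⁻¹ * u) - hbar A u
          = (hbar A (t⁻¹ * u) - gsamp A m W (t⁻¹ * u)) + (gsamp A m Z u - hbar A u) := by
        intro u; rw [hgZ u]; ring
      have hstep : nsq (fun u => hbar A (t⁻¹ * u) - hbar A u)
          ≤ 2 * nsq (fun u => hbar A (t⁻¹ * u) - gsamp A m W (t⁻¹ * u))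
            + 2 * nsq (fun u => gsamp A m Z u - hbar A u) := by
        have he : nsq (fun u => hbar A (t⁻¹ * u) - hbar A u)
            = nsq (fun u => (hbar A (t⁻¹ * u) - gsamp A m W (t⁻¹ * u))
              + (gsamp A m Z u - hbar A u)) := by
          unfold nsq
          refine Finset.sum_congr rfl fun u _ => ?_
          show (hbar A (t⁻¹ * u) - hbar A u) ^ 2 = _
          rw [hpt u]
        rw [he]
        exact nsq_add_le _ _
      have e1 : nsq (fun u => hbar A (t⁻¹ * u) - gsamp A m W (t⁻¹ * u))
          = nsq (fun u => hbar A u - gsamp A m W u) :=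
        nsq_translate (fun u => hbar A u - gsamp A m W u) t⁻¹
      have e2 : nsq (fun u => hbar A u - gsamp A m W u) = Dsamp A m W := by
        unfold Dsamp
        exact nsq_neg_sub _ _
      have e3 : nsq (fun u => gsamp A m Z u - hbar A u) = Dsamp A m Z := rfl
      rw [e1, e2, e3] at hstep
      linarith
    have hF : (Ffun A (t⁻¹ * x) - Ffun A x) ^ 2 ≤ (δ * a ^ 2) ^ 2 := by
      have hrep : Ffun A (t⁻¹ * x) - Ffun A x
          = cnv (fun y => cnv (indF A) (indF (A * A)) (t⁻¹ * y)
              - cnv (indF A) (indF (A * A)) y) (indF A) x := by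
        rw [cnv_sub_left]
        unfold Ffun
        rw [cnv_translate (cnv (indF A) (indF (A * A))) (indF A) t⁻¹ x]
      rw [hrep]
      refine le_trans (cnv_sq_le _ _ x) ?_
      have e3 : nsq (fun y => cnv (indF A) (indF (A * A)) (t⁻¹ * y)
            - cnv (indF A) (indF (A * A)) y)
          = a ^ 2 * nsq (fun y => hbar A (t⁻¹ * y) - hbar A y) := by
        unfold nsq
        rw [Finset.mul_sum]
        refine Finset.sum_congr rfl fun y _ => ?_
        show (cnv (indF A) (indF (A * A)) (t⁻¹ * y) - cnv (indF A) (indF (A * A)) y) ^ 2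
          = a ^ 2 * (hbar A (t⁻¹ * y) - hbar A y) ^ 2
        rw [h_eq (t⁻¹ * y), h_eq y]
        ring
      rw [e3, nsq_indF, ← ha_def]
      have hb1 : a ^ 2 * nsq (fun y => hbar A (t⁻¹ * y) - hbar A y) * a
          ≤ a ^ 2 * (4 * v) * a := by
        have h3 : (0:ℝ) ≤ a ^ 2 * a := mul_nonneg (pow_nonneg ha.le 2) ha.le
        calc a ^ 2 * nsq (fun y => hbar A (t⁻¹ * y) - hbar A y) * a
            = (a ^ 2 * a) * nsq (fun y => hbar A (t⁻¹ * y) - hbar A y) := by ring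
          _ ≤ (a ^ 2 * a) * (4 * v) := mul_le_mul_of_nonneg_left hmid h3
          _ = a ^ 2 * (4 * v) * a := by ring
      refine le_trans hb1 ?_
      have hvv : a ^ 2 * (4 * v) * a = 8 * K * a ^ 4 / ((m:ℝ)+1) := by
        rw [hv_def]
        field_simp
        ring
      rw [hvv]
      have hfin : 8 * K * a ^ 4 / ((m:ℝ)+1) ≤ δ ^ 2 * a ^ 4 := by
        rw [div_le_iff₀ hkpos]
        nlinarith [hm, pow_pos ha 4, pow_nonneg (le_of_lt ha) 4]
      refine le_trans hfin (le_of_eq ?_)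
      ring
    have h0 : (0:ℝ) ≤ δ * a ^ 2 := mul_nonneg hδ.le (pow_nonneg ha.le 2)
    have hs := Real.sqrt_le_sqrt hF
    rw [Real.sqrt_sq_eq_abs, Real.sqrt_sq h0] at hs
    exact hs
  calc a / (2 * K ^ m) ≤ (Fib.card : ℝ) := hFibcard
    _ = ((Fib.image (fun Z => (Z 0 : H) * ((W 0 : H))⁻¹)).card : ℝ) := hcardim.symm
    _ ≤ ((Sper A δ).card : ℝ) := by exact_mod_cast Finset.card_le_card hsub

theorem core (K : ℝ) (hK : 1 ≤ K) (r : ℕ) (ε : ℝ) (hε : 0 < ε) (hε1 : ε ≤ 1) :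
    ∃ c : ℝ, 0 < c ∧
      ∀ (H : Type u) [Group H] [Fintype H] [DecidableEq H] (A : Finset H),
        A.Nonempty → A⁻¹ = A → ((A * A).card : ℝ) ≤ K * (A.card : ℝ) →
        ∃ B B' Bp Bm : Finset H,
          (1 ∈ B ∧ B⁻¹ = B) ∧ (1 ∈ B' ∧ B'⁻¹ = B') ∧ (1 ∈ Bp ∧ Bp⁻¹ = Bp) ∧
          (1 ∈ Bm ∧ Bm⁻¹ = Bm) ∧
          c * (B.card : ℝ) ≤ (B'.card : ℝ) ∧
          B' ^ r * Bm * B' ^ r ⊆ B ∧ B' ^ r * B * B' ^ r ⊆ Bp ∧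
          ((Bp \ Bm).card : ℝ) ≤ ε * (B.card : ℝ) ∧
          B ⊆ A ^ 4 ∧ (A.card : ℝ) / 2 ≤ (B.card : ℝ) := by
  have hK0 : 0 < K := lt_of_lt_of_le one_pos hK
  set Mc : ℕ := ⌈16 * K ^ 2 / ε⌉₊ with hMc_def
  have hMc : 16 * K ^ 2 / ε ≤ (Mc : ℝ) := Nat.le_ceil _
  have hMc0 : (0:ℝ) < (Mc:ℝ) := lt_of_lt_of_le (by positivity) hMc
  set η : ℝ := 1 / (4 * K * ((Mc : ℝ) + 1)) with hη_def
  have hη : 0 < η := by rw [hη_def]; positivity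
  set δ : ℝ := η / (2 * ((r : ℝ) + 1)) with hδ_def
  have hδ : 0 < δ := by rw [hδ_def]; positivity
  set m : ℕ := ⌈8 * K / δ ^ 2⌉₊ with hm_def
  have hm : 8 * K ≤ δ ^ 2 * ((m : ℝ) + 1) := by
    have h1 : 8 * K / δ ^ 2 ≤ (m:ℝ) := Nat.le_ceil _
    have h2 : (m:ℝ) ≤ (m:ℝ) + 1 := by linarith
    calc 8*K = (8*K/δ^2) * δ^2 := by field_simp
      _ ≤ ((m:ℝ)+1) * δ^2 :=
        mul_le_mul_of_nonneg_right (le_trans h1 h2) (le_of_lt (by positivity))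
      _ = δ^2 * ((m:ℝ)+1) := by ring
  have h2rδ : 2*(r:ℝ)*δ ≤ η := by
    have hr1 : (0:ℝ) < (r:ℝ)+1 := by positivity
    rw [hδ_def]
    have e : 2*(r:ℝ)*(η/(2*((r:ℝ)+1))) = η * ((r:ℝ)/((r:ℝ)+1)) := by
      field_simp
    rw [e]
    have hle1 : (r:ℝ)/((r:ℝ)+1) ≤ 1 := by
      rw [div_le_one hr1]
      linarith
    nlinarith [hη]
  clear_value Mc η δ m
  refine ⟨1 / (8 * K ^ (m + 2)), by positivity, ?_⟩
  intro H _ _ _ A hA hsym hdbl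
  classical
  set a : ℝ := (A.card : ℝ) with ha_def
  have ha : 0 < a := by rw [ha_def]; exact_mod_cast Finset.card_pos.mpr hA
  have hS := sper_card_ge A hA hsym K hK hdbl δ hδ m hm
  rw [← ha_def] at hS
  -- level sets
  set tj : ℕ → ℝ := fun j => a^2 * (1/(2*K) - j * η) with htj_def
  set BL : ℕ → Finset H := fun j => Finset.univ.filter (fun x => tj j ≤ Ffun A x) with hBL_def
  have hmemBL : ∀ j x, x ∈ BL j ↔ tj j ≤ Ffun A x := by
    intro j x; rw [hBL_def]; simp
  clear_value a tj BL
  have htjval : ∀ j : ℕ, tj j = a^2 * (1/(2*K) - j * η) := fun j => by rw [htj_def]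
  have htmono : ∀ i j : ℕ, i ≤ j → tj j ≤ tj i := by
    intro i j hij
    rw [htjval, htjval]
    have h1 : (i:ℝ) * η ≤ (j:ℝ)*η :=
      mul_le_mul_of_nonneg_right (by exact_mod_cast hij) (le_of_lt hη)
    exact mul_le_mul_of_nonneg_left (by linarith) (sq_nonneg a)
  have hBLmono : ∀ i j : ℕ, i ≤ j → BL i ⊆ BL j := by
    intro i j hij x hx
    rw [hmemBL] at hx ⊢
    exact le_trans (htmono i j hij) hx
  have htlow : ∀ j : ℕ, j ≤ Mc + 1 → a^2/(4*K) ≤ tj j := by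
    intro j hj
    rw [htjval]
    have hj' : (j:ℝ) ≤ (Mc:ℝ)+1 := by exact_mod_cast hj
    have h1 : (j:ℝ) * η ≤ ((Mc:ℝ)+1) * η := mul_le_mul_of_nonneg_right hj' (le_of_lt hη)
    have h2 : ((Mc:ℝ)+1) * η = 1/(4*K) := by
      rw [hη_def]
      field_simp
    have h3 : 1/(4*K) ≤ 1/(2*K) - (j:ℝ)*η := by
      rw [h2] at h1
      have h4 : 1/(2*K) - 1/(4*K) = 1/(4*K) := by field_simp; ring
      linarith
    calc a^2/(4*K) = a^2 * (1/(4*K)) := by ring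
      _ ≤ a^2 * (1/(2*K) - (j:ℝ)*η) := mul_le_mul_of_nonneg_left h3 (sq_nonneg a)
  have htpos : ∀ j : ℕ, j ≤ Mc + 1 → 0 < tj j := fun j hj =>
    lt_of_lt_of_le (by positivity) (htlow j hj)
  have hFsum : ∑ x, Ffun A x ≤ K * a^3 := by
    rw [sum_Ffun, ← ha_def]
    calc a^2 * ((A*A).card:ℝ) ≤ a^2 * (K*a) :=
      mul_le_mul_of_nonneg_left hdbl (sq_nonneg _)
      _ = K * a^3 := by ring
  have hBLcard : ∀ j : ℕ, j ≤ Mc + 1 → ((BL j).card : ℝ) ≤ 4*K^2*a := by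
    intro j hj
    have h1 : ((BL j).card:ℝ) * tj j ≤ ∑ x ∈ BL j, Ffun A x := by
      have h := Finset.card_nsmul_le_sum (BL j) (Ffun A) (tj j)
        (fun x hx => (hmemBL j x).mp hx)
      rw [nsmul_eq_mul] at h
      linarith
    have h2 : ∑ x ∈ BL j, Ffun A x ≤ ∑ x, Ffun A x :=
      Finset.sum_le_sum_of_subset_of_nonneg (Finset.subset_univ _)
        (fun x _ _ => Ffun_nonneg A x)
    have h3 : ((BL j).card:ℝ) * (a^2/(4*K)) ≤ K * a^3 := by
      calc ((BL j).card:ℝ) * (a^2/(4*K)) ≤ ((BL j).card:ℝ) * tj j :=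
        mul_le_mul_of_nonneg_left (htlow j hj) (Nat.cast_nonneg _)
        _ ≤ K * a^3 := le_trans h1 (le_trans h2 hFsum)
    have ha2 : (0:ℝ) < a^2/(4*K) := by positivity
    have h4 : ((BL j).card:ℝ) ≤ (K*a^3) / (a^2/(4*K)) := by
      rw [le_div_iff₀ ha2]
      linarith
    have h5 : (K*a^3)/(a^2/(4*K)) = 4*K^2*a := by
      field_simp
    rw [h5] at h4
    exact h4
  -- lower bound on BL 0 via popular products
  have hBL0 : a/2 ≤ ((BL 0).card : ℝ) := by
    set ν : H → ℝ := cnv (indF A) (indF A) with hν_def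
    have hνsum : ∑ x, ν x = a^2 := by
      rw [hν_def, sum_cnv, sum_indF, ← ha_def]
      ring
    have hνle : ∀ x, ν x ≤ a := by
      intro x
      rw [hν_def]
      unfold cnv
      calc ∑ y, indF A y * indF A (y⁻¹ * x) ≤ ∑ y, indF A y * 1 :=
        Finset.sum_le_sum fun y _ =>
          mul_le_mul_of_nonneg_left (indF_le_one _ _) (indF_nonneg _ _)
        _ = a := by
          simp only [mul_one]
          rw [sum_indF, ← ha_def]
    have hνnn : ∀ x, 0 ≤ ν x := by
      intro x
      rw [hν_def]
      exact Finset.sum_nonneg fun y _ => mul_nonneg (indF_nonneg _ _) (indF_nonneg _ _)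
    have hνsupp : ∀ x, x ∉ A * A → ν x = 0 := by
      intro x hx
      rw [hν_def]
      unfold cnv
      refine Finset.sum_eq_zero fun y _ => ?_
      by_cases hy : y ∈ A
      · by_cases hyx : y⁻¹ * x ∈ A
        · exfalso
          apply hx
          have h := Finset.mul_mem_mul hy hyx
          rwa [mul_inv_cancel_left] at h
        · simp [indF, hyx]
      · simp [indF, hy]
    set T : Finset H := Finset.univ.filter (fun x => a/(2*K) ≤ ν x) with hT_def
    set Q : Finset H := Finset.univ.filter (fun x => ¬ a/(2*K) ≤ ν x) with hQ_def
    have hsplit : ∑ x ∈ T, ν x + ∑ x ∈ Q, ν x = a^2 := by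
      rw [hT_def, hQ_def, Finset.sum_filter_add_sum_filter_not]
      exact hνsum
    have hQbound : ∑ x ∈ Q, ν x ≤ a^2/2 := by
      have he : ∑ x ∈ Q, ν x = ∑ x ∈ Q ∩ (A * A), ν x := by
        refine (Finset.sum_subset Finset.inter_subset_left ?_).symm
        intro x hx hnx
        refine hνsupp x ?_
        intro hM
        exact hnx (Finset.mem_inter.mpr ⟨hx, hM⟩)
      rw [he]
      have h1 : ∑ x ∈ Q ∩ (A * A), ν x ≤ ((Q ∩ (A*A)).card : ℝ) * (a/(2*K)) := by
        have h := Finset.sum_le_card_nsmul (Q ∩ (A*A)) ν (a/(2*K)) ?_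
        · rw [nsmul_eq_mul] at h; linarith
        · intro x hx
          have hxQ : x ∈ Q := Finset.mem_inter.mp hx |>.1
          rw [hQ_def, Finset.mem_filter] at hxQ
          linarith [lt_of_not_ge hxQ.2]
      have h2 : ((Q ∩ (A*A)).card : ℝ) ≤ ((A*A).card : ℝ) := by
        exact_mod_cast Finset.card_le_card Finset.inter_subset_right
      have h3 : ((Q ∩ (A*A)).card : ℝ) * (a/(2*K)) ≤ (K*a) * (a/(2*K)) := by
        refine mul_le_mul_of_nonneg_right (le_trans h2 ?_) (by positivity)
        exact hdbl
      have h4 : (K*a) * (a/(2*K)) = a^2/2 := by field_simp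
      linarith
    have hTsum : a^2/2 ≤ ∑ x ∈ T, ν x := by linarith
    have hTcard : a/2 ≤ (T.card:ℝ) := by
      have h1 : ∑ x ∈ T, ν x ≤ (T.card:ℝ) * a := by
        have h := Finset.sum_le_card_nsmul T ν a (fun x _ => hνle x)
        rw [nsmul_eq_mul] at h
        linarith
      have h2 : (a/2) * a ≤ (T.card:ℝ) * a := by nlinarith
      exact le_of_mul_le_mul_right h2 ha
    have hTsub : T ⊆ BL 0 := by
      intro x hx
      rw [hmemBL]
      have hx' : a/(2*K) ≤ ν x := by
        rw [hT_def, Finset.mem_filter] at hx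
        exact hx.2
      have h2 := Ffun_ge_nu A hsym x
      rw [← hν_def, ← ha_def] at h2
      have h3 : a^2/(2*K) ≤ ν x * a := by
        calc a^2/(2*K) = (a/(2*K)) * a := by ring
          _ ≤ ν x * a := mul_le_mul_of_nonneg_right hx' (le_of_lt ha)
      have h4 : tj 0 = a^2/(2*K) := by
        rw [htjval]
        push_cast
        ring
      rw [h4]
      linarith
    calc a/2 ≤ (T.card:ℝ) := hTcard
      _ ≤ ((BL 0).card:ℝ) := by exact_mod_cast Finset.card_le_card hTsub
  -- pigeonhole for the thin annulus
  have hpig : ∃ l : ℕ, l < Mc ∧ ((BL (l+2) \ BL l).card : ℝ) ≤ ε * a / 2 := by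
    by_contra hcon
    push_neg at hcon
    have hstep : ∀ l : ℕ, ((BL (l+2) \ BL l).card:ℝ)
        ≤ (((BL (l+2)).card:ℝ) - ((BL (l+1)).card:ℝ))
          + (((BL (l+1)).card:ℝ) - ((BL l).card:ℝ)) := by
      intro l
      have hsub1 : BL (l+2) \ BL l ⊆ (BL (l+2) \ BL (l+1)) ∪ (BL (l+1) \ BL l) := by
        intro x hx
        rw [Finset.mem_sdiff] at hx
        by_cases h : x ∈ BL (l+1)
        · exact Finset.mem_union_right _ (Finset.mem_sdiff.mpr ⟨h, hx.2⟩)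
        · exact Finset.mem_union_left _ (Finset.mem_sdiff.mpr ⟨hx.1, h⟩)
      have h1 := Finset.card_le_card hsub1
      have h2 := Finset.card_union_le (BL (l+2) \ BL (l+1)) (BL (l+1) \ BL l)
      have hc1 : (BL (l+1)).card ≤ (BL (l+2)).card :=
        Finset.card_le_card (hBLmono _ _ (by omega))
      have hc2 : (BL l).card ≤ (BL (l+1)).card :=
        Finset.card_le_card (hBLmono _ _ (by omega))
      have h3 : (BL (l+2) \ BL (l+1)).card = (BL (l+2)).card - (BL (l+1)).card :=
        Finset.card_sdiff_of_subset (hBLmono _ _ (by omega))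
      have h4 : (BL (l+1) \ BL l).card = (BL (l+1)).card - (BL l).card :=
        Finset.card_sdiff_of_subset (hBLmono _ _ (by omega))
      have h5 : ((BL (l+2) \ BL l).card:ℝ)
          ≤ ((BL (l+2) \ BL (l+1)).card:ℝ) + ((BL (l+1) \ BL l).card:ℝ) := by
        exact_mod_cast le_trans h1 h2
      rw [h3, h4] at h5
      rw [Nat.cast_sub hc1, Nat.cast_sub hc2] at h5
      exact h5
    have hub : ∑ l ∈ Finset.range Mc, ((BL (l+2) \ BL l).card:ℝ) ≤ 8*K^2*a := by
      have hsum1 : ∑ l ∈ Finset.range Mc,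
          ((((BL (l+2)).card:ℝ) - ((BL (l+1)).card:ℝ))
            + (((BL (l+1)).card:ℝ) - ((BL l).card:ℝ)))
          = (((BL (Mc+1)).card:ℝ) - ((BL 1).card:ℝ))
            + (((BL Mc).card:ℝ) - ((BL 0).card:ℝ)) := by
        rw [Finset.sum_add_distrib]
        rw [Finset.sum_range_sub (fun i => ((BL (i+1)).card : ℝ)) Mc]
        rw [Finset.sum_range_sub (fun i => ((BL i).card : ℝ)) Mc]
      calc ∑ l ∈ Finset.range Mc, ((BL (l+2) \ BL l).card:ℝ)
          ≤ ∑ l ∈ Finset.range Mc,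
            ((((BL (l+2)).card:ℝ) - ((BL (l+1)).card:ℝ))
              + (((BL (l+1)).card:ℝ) - ((BL l).card:ℝ))) :=
            Finset.sum_le_sum fun l _ => hstep l
        _ = (((BL (Mc+1)).card:ℝ) - ((BL 1).card:ℝ))
            + (((BL Mc).card:ℝ) - ((BL 0).card:ℝ)) := hsum1
        _ ≤ 8*K^2*a := by
            have u1 := hBLcard (Mc+1) (le_refl _)
            have u2 := hBLcard Mc (by omega)
            have l1 : (0:ℝ) ≤ ((BL 1).card:ℝ) := Nat.cast_nonneg _
            have l0 : (0:ℝ) ≤ ((BL 0).card:ℝ) := Nat.cast_nonneg _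
            linarith
    have hMcpos : 0 < Mc := by exact_mod_cast hMc0
    have hne : (Finset.range Mc).Nonempty := by
      rw [Finset.nonempty_range_iff]
      omega
    have hlb : (Mc:ℝ) * (ε*a/2) < ∑ l ∈ Finset.range Mc, ((BL (l+2) \ BL l).card:ℝ) := by
      have h := Finset.sum_lt_sum_of_nonempty hne
        (f := fun _ => ε*a/2) (g := fun l => ((BL (l+2) \ BL l).card:ℝ))
        (fun l hl => hcon l (Finset.mem_range.mp hl))
      rw [Finset.sum_const, Finset.card_range, nsmul_eq_mul] at h
      exact h
    have hfin : 8*K^2*a ≤ (Mc:ℝ) * (ε*a/2) := by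
      have h1 : 16*K^2/ε * (ε*a/2) = 8*K^2*a := by field_simp; ring
      calc 8*K^2*a = 16*K^2/ε * (ε*a/2) := h1.symm
        _ ≤ (Mc:ℝ) * (ε*a/2) := mul_le_mul_of_nonneg_right hMc (by positivity)
    linarith
  obtain ⟨l, hlM, hldiff⟩ := hpig
  -- symmetric neighbourhoods
  have hsymBL : ∀ j, (BL j)⁻¹ = BL j := by
    intro j
    ext x
    rw [Finset.mem_inv', hmemBL, hmemBL, Ffun_inv A hsym x]
  have h1BL : ∀ j : ℕ, j ≤ Mc + 1 → 1 ∈ BL j := by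
    intro j hj
    rw [hmemBL]
    have h1 := Ffun_one_ge A hsym
    rw [← ha_def] at h1
    have h5 : tj j ≤ a^2 := by
      rw [htjval]
      have h6 : 1/(2*K) ≤ 1 := by
        rw [div_le_one (by positivity)]
        linarith
      have h7 : (0:ℝ) ≤ (j:ℝ)*η := by positivity
      nlinarith [sq_nonneg a]
    linarith
  have hBge : a/2 ≤ ((BL (l+1)).card:ℝ) := by
    refine le_trans hBL0 ?_
    exact_mod_cast Finset.card_le_card (hBLmono 0 (l+1) (by omega))
  -- bounds used in the containments
  have hgap : ∀ j : ℕ, tj j - tj (j+1) = a^2 * η := by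
    intro j
    rw [htjval, htjval]
    push_cast
    ring
  have hkey : ∀ u ∈ (Sper A δ) ^ r, ∀ w2 ∈ (Sper A δ) ^ r, ∀ z : H,
      Ffun A z - a^2 * η ≤ Ffun A (u * z * w2) := by
    intro u hu w2 hw2 z
    have hL := sper_left r u hu (z * w2)
    have hR := sper_right hsym r w2 hw2 z
    rw [← ha_def] at hL hR
    have e : u * z * w2 = u * (z * w2) := by group
    rw [e]
    have h1 := (abs_le.mp hL).1
    have h2 := (abs_le.mp hR).1
    have h3 : 2*(r:ℝ)*δ*a^2 ≤ η*a^2 :=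
      mul_le_mul_of_nonneg_right h2rδ (sq_nonneg a)
    linarith [h1, h2, h3]
  refine ⟨BL (l+1), Sper A δ, BL (l+2), BL l,
    ⟨h1BL (l+1) (by omega), hsymBL (l+1)⟩,
    ⟨one_mem_Sper (le_of_lt hδ), Sper_inv_eq⟩,
    ⟨h1BL (l+2) (by omega), hsymBL (l+2)⟩,
    ⟨h1BL l (by omega), hsymBL l⟩,
    ?_, ?_, ?_, ?_, ?_, ?_⟩
  · -- thickness
    have hBcard := hBLcard (l+1) (by omega)
    calc (1/(8*K^(m+2))) * ((BL (l+1)).card:ℝ)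
        ≤ (1/(8*K^(m+2))) * (4*K^2*a) :=
          mul_le_mul_of_nonneg_left hBcard (by positivity)
      _ = a/(2*K^m) := by
          rw [pow_add]
          field_simp
          ring
      _ ≤ ((Sper A δ).card:ℝ) := hS
  · -- S^r * BL l * S^r ⊆ BL (l+1)
    intro x hx
    rw [Finset.mem_mul] at hx
    obtain ⟨y, hy, w2, hw2, rfl⟩ := hx
    rw [Finset.mem_mul] at hy
    obtain ⟨u, hu, z, hz, rfl⟩ := hy
    rw [hmemBL] at hz ⊢
    have hk := hkey u hu w2 hw2 z
    have hgap' := hgap l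
    linarith
  · -- S^r * BL (l+1) * S^r ⊆ BL (l+2)
    intro x hx
    rw [Finset.mem_mul] at hx
    obtain ⟨y, hy, w2, hw2, rfl⟩ := hx
    rw [Finset.mem_mul] at hy
    obtain ⟨u, hu, z, hz, rfl⟩ := hy
    rw [hmemBL] at hz ⊢
    have hk := hkey u hu w2 hw2 z
    have hgap' := hgap (l+1)
    linarith
  · -- small difference
    calc ((BL (l+2) \ BL l).card:ℝ) ≤ ε * a / 2 := hldiff
      _ ≤ ε * ((BL (l+1)).card:ℝ) := by nlinarith [hBge, hε]
  · -- inside A^4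
    intro x hx
    rw [hmemBL] at hx
    exact Ffun_pos_mem A (lt_of_lt_of_le (htpos (l+1) (by omega)) hx)
  · -- size lower bound
    exact hBge

end WFaux

/-- Weak Freiman-type theorem (containment form): a symmetric set of small doubling
contains a large ground set of a multiplicative pair inside its fourth power. -/
theorem weak_freiman_containment :
    ∃ C₁ C₂ : ℝ, 1 ≤ C₁ ∧ 1 ≤ C₂ ∧
      ∀ K : ℝ, 1 ≤ K → ∀ r : ℕ, ∀ ε : ℝ, 0 < ε → ε ≤ 1 →
        ∃ c > (0 : ℝ),
          ∀ (G : Type u) [Group G] [Fintype G], ∀ A : Set G,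
            A.Nonempty → A⁻¹ = A → density (A * A) ≤ K * density A →
            ∃ B B' : Set G, IsMultPair B B' r ε c ∧ B ⊆ A ^ 4 ∧
              C₁⁻¹ * K ^ (-C₂) * density A ≤ density B := by
  refine ⟨2, 1, one_le_two, le_refl 1, ?_⟩
  intro K hK r ε hε hε1
  obtain ⟨c, hc, hcore⟩ := WFaux.core K hK r ε hε hε1
  refine ⟨c, hc, ?_⟩
  intro G _ _ A hA hsym hdbl
  letI : DecidableEq G := Classical.decEq G
  set A' : Finset G := (Set.toFinite A).toFinset with hA'_def
  have hcoe : (A' : Set G) = A := Set.Finite.coe_toFinset _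
  have hcard : ∀ X : Finset G,
      density (↑X : Set G) = (X.card : ℝ) / (Fintype.card G : ℝ) := by
    intro X
    unfold density
    rw [Nat.card_coe_set_eq, Set.ncard_coe_finset]
  have hGpos : (0:ℝ) < (Fintype.card G : ℝ) := by exact_mod_cast Fintype.card_pos
  have hdiv : ∀ x y : ℝ, x ≤ y →
      x / (Fintype.card G : ℝ) ≤ y / (Fintype.card G : ℝ) :=
    fun x y hxy => div_le_div_of_nonneg_right hxy hGpos.le
  have hA'ne : A'.Nonempty := by
    rw [← Finset.coe_nonempty, hcoe]
    exact hA
  have hA'sym : A'⁻¹ = A' := by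
    apply Finset.coe_injective
    rw [Finset.coe_inv, hcoe, hsym]
  have hmulcoe : ((A' * A' : Finset G) : Set G) = A * A := by
    rw [Finset.coe_mul, hcoe]
  have hdbl' : ((A' * A').card : ℝ) ≤ K * (A'.card : ℝ) := by
    have h1 := hdbl
    rw [← hmulcoe, ← hcoe, hcard, hcard] at h1
    rw [div_le_iff₀ hGpos] at h1
    have h2 : K * ((A'.card:ℝ) / (Fintype.card G : ℝ)) * (Fintype.card G : ℝ)
        = K * (A'.card : ℝ) := by
      field_simp
    rw [h2] at h1
    exact h1
  obtain ⟨B, B', Bp, Bm, hB1, hB'1, hBp1, hBm1, hthick, hsub1, hsub2, hsmall, hsubA4, hBge⟩ :=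
    hcore G A' hA'ne hA'sym hdbl'
  refine ⟨(B : Set G), (B' : Set G), ?_, ?_, ?_⟩
  · refine ⟨⟨?_, ?_⟩, ⟨?_, ?_⟩, ?_, (Bp : Set G), (Bm : Set G), ⟨?_, ?_⟩, ⟨?_, ?_⟩,
      ?_, ?_, ?_⟩
    · exact Finset.mem_coe.mpr hB1.1
    · rw [← Finset.coe_inv, hB1.2]
    · exact Finset.mem_coe.mpr hB'1.1
    · rw [← Finset.coe_inv, hB'1.2]
    · rw [hcard, hcard, ← mul_div_assoc]
      exact hdiv _ _ hthick
    · exact Finset.mem_coe.mpr hBp1.1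
    · rw [← Finset.coe_inv, hBp1.2]
    · exact Finset.mem_coe.mpr hBm1.1
    · rw [← Finset.coe_inv, hBm1.2]
    · rw [← Finset.coe_pow, ← Finset.coe_mul, ← Finset.coe_mul]
      exact Finset.coe_subset.mpr hsub1
    · rw [← Finset.coe_pow, ← Finset.coe_mul, ← Finset.coe_mul]
      exact Finset.coe_subset.mpr hsub2
    · rw [← Finset.coe_sdiff, hcard, hcard, ← mul_div_assoc]
      exact hdiv _ _ hsmall
  · have h := Finset.coe_subset.mpr hsubA4
    rwa [Finset.coe_pow, hcoe] at h
  · rw [← hcoe, hcard, hcard]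
    have hK1 : K ^ (-(1:ℝ)) = K⁻¹ := Real.rpow_neg_one K
    rw [hK1]
    have hKinv : K⁻¹ ≤ 1 := inv_le_one_of_one_le₀ hK
    have hKinv0 : (0:ℝ) ≤ K⁻¹ :=
      inv_nonneg.mpr (le_of_lt (lt_of_lt_of_le one_pos hK))
    have h1 : (2:ℝ)⁻¹ * K⁻¹ * (A'.card:ℝ) ≤ (B.card:ℝ) := by
      have hxnn : (0:ℝ) ≤ (A'.card:ℝ) := Nat.cast_nonneg _
      nlinarith [hBge]
    rw [← mul_div_assoc]
    exact hdiv _ _ h1
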